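/- The sequence n ↦ ln 2 − (2/n)·Σ_{j=1}^n η(sin²(π j / n)) converges, as n → ∞, to 1 − ln 2. (This is the limit of the informational power of the regular n-gon qubit POVMs.) -/

import Mathlib

open Filter Real

open MeasureTheory intervalIntegral in

open MeasureTheory intervalIntegral in
lemma logsin_int_half : IntervalIntegrable (fun t => Real.log (Real.sin t)) volume 0 (π/2) := by
  rw [intervalIntegrable_iff_integrableOn_Ioc_of_le (by positivity)]
  have hg : IntegrableOn (fun t : ℝ => 3 * t ^ (-(1/2) : ℝ)) (Set.Ioc 0 (π/2)) volume := by
    rw [← intervalIntegrable_iff_integrableOn_Ioc_of_le (by positivity)]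
    exact (intervalIntegrable_rpow' (by norm_num)).const_mul 3
  refine hg.integrable.mono' ((Real.measurable_log.comp Real.measurable_sin).aestronglyMeasurable)
    (ae_restrict_of_forall_mem measurableSet_Ioc ?_)
  intro t ht
  obtain ⟨ht0, ht1⟩ := ht
  have hs : 2 / π * t ≤ Real.sin t := Real.mul_le_sin ht0.le ht1
  have h2t : 0 < 2 / π * t := by positivity
  have hsin_pos : 0 < Real.sin t := lt_of_lt_of_le h2t hs
  have hub : Real.log (Real.sin t) ≤ 0 :=
    Real.log_nonpos hsin_pos.le (Real.sin_le_one t)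
  have hst : (0:ℝ) < Real.sqrt t := Real.sqrt_pos.mpr ht0
  have hlb : -Real.log (Real.sin t) ≤ 3 * t ^ (-(1/2) : ℝ) := by
    have h1 : Real.log (2 / π * t) ≤ Real.log (Real.sin t) := Real.log_le_log h2t hs
    have h2 : -Real.log (2 / π * t) = Real.log (π / 2 / t) := by
      rw [← Real.log_inv]; congr 1; field_simp
    have hy : (0:ℝ) < π / 2 / t := by positivity
    have hsq : Real.sqrt (π / 2 / t) ^ 2 = π / 2 / t := Real.sq_sqrt hy.le
    have hlog2 : Real.log (π / 2 / t) = 2 * Real.log (Real.sqrt (π / 2 / t)) := by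
      conv_lhs => rw [← hsq]
      rw [Real.log_pow]; push_cast; ring
    have hle : Real.log (Real.sqrt (π / 2 / t)) ≤ Real.sqrt (π / 2 / t) :=
      (Real.log_le_sub_one_of_pos (Real.sqrt_pos.mpr hy)).trans (by linarith)
    have hsplit : Real.sqrt (π / 2 / t) = Real.sqrt (π/2) / Real.sqrt t :=
      Real.sqrt_div (by positivity) t
    have hpi : Real.sqrt (π/2) ≤ 3/2 := by
      rw [Real.sqrt_le_iff]
      constructor
      · norm_num
      · nlinarith [Real.pi_le_four]
    have hrp : t ^ (-(1/2) : ℝ) = (Real.sqrt t)⁻¹ := by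
      rw [Real.rpow_neg ht0.le, ← Real.sqrt_eq_rpow]
    rw [hrp]
    have : Real.sqrt (π/2) / Real.sqrt t ≤ (3/2) * (Real.sqrt t)⁻¹ := by
      rw [div_eq_mul_inv]
      gcongr
    nlinarith [h1, h2, hlog2, hle, hsplit, this]
  rw [Real.norm_eq_abs, abs_of_nonpos hub]
  linarith

open MeasureTheory intervalIntegral in
lemma logsin_int : IntervalIntegrable (fun t => Real.log (Real.sin t)) volume 0 π := by
  refine logsin_int_half.trans ?_
  have h := logsin_int_half.comp_sub_left π
  simp only [sub_zero] at h
  have heq : (fun x => Real.log (Real.sin (π - x))) = fun x => Real.log (Real.sin x) := by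
    funext x; rw [Real.sin_pi_sub]
  rw [heq] at h
  have h2 := h
  have : π - π/2 = π/2 := by ring
  rw [this] at h2
  exact h2.symm

open MeasureTheory intervalIntegral in
lemma logcos_int_half : IntervalIntegrable (fun t => Real.log (Real.cos t)) volume 0 (π/2) := by
  have h := (logsin_int_half.comp_sub_left (π/2)).symm
  simp only [sub_zero, sub_self] at h
  have heq : (fun x => Real.log (Real.sin (π/2 - x))) = fun x => Real.log (Real.cos x) := by
    funext x; rw [Real.sin_pi_div_two_sub]
  rwa [heq] at h

open MeasureTheory intervalIntegral in
lemma logsin_int_half2 : IntervalIntegrable (fun t => Real.log (Real.sin t)) volume (π/2) π := by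
  have h := (logsin_int_half.comp_sub_left π).symm
  simp only [sub_zero] at h
  have heq : (fun x => Real.log (Real.sin (π - x))) = fun x => Real.log (Real.sin x) := by
    funext x; rw [Real.sin_pi_sub]
  rw [heq] at h
  have hh : π - π/2 = π/2 := by ring
  rwa [hh] at h

open MeasureTheory intervalIntegral in
lemma integral_log_sin_pi : ∫ x in (0:ℝ)..π, Real.log (Real.sin x) = -π * Real.log 2 := by
  set J := ∫ x in (0:ℝ)..(π/2), Real.log (Real.sin x) with hJ
  have hcos : ∫ x in (0:ℝ)..(π/2), Real.log (Real.cos x) = J := by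
    have h := intervalIntegral.integral_comp_sub_left
      (a := (0:ℝ)) (b := π/2) (fun x => Real.log (Real.sin x)) (π/2)
    simp only [sub_zero, sub_self, Real.sin_pi_div_two_sub] at h
    rw [hJ, ← h]
  have hhalf2 : ∫ x in (π/2:ℝ)..π, Real.log (Real.sin x) = J := by
    have h := intervalIntegral.integral_comp_sub_left
      (a := (0:ℝ)) (b := π/2) (fun x => Real.log (Real.sin x)) π
    simp only [sub_zero, Real.sin_pi_sub] at h
    rw [hJ, h]
    congr 1
    ring
  have hfull : ∫ x in (0:ℝ)..π, Real.log (Real.sin x) = 2 * J := by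
    rw [← intervalIntegral.integral_add_adjacent_intervals logsin_int_half logsin_int_half2,
      hhalf2, ← hJ]
    ring
  have hdint : IntervalIntegrable (fun x => Real.log (Real.sin (2 * x))) volume 0 (π/2) := by
    have h := logsin_int.comp_mul_left (c := 2)
    norm_num at h
    exact h
  have hdouble : ∫ x in (0:ℝ)..(π/2), Real.log (Real.sin (2 * x)) = J := by
    have h := intervalIntegral.integral_comp_mul_left
      (a := (0:ℝ)) (b := π/2) (fun x => Real.log (Real.sin x)) two_ne_zero
    norm_num at h
    rw [h]
    have h2 : 2 * (π/2) = π := by ring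
    rw [h2, hfull]
    ring
  have hne : ∀ᵐ x : ℝ, x ≠ π/2 := by
    rw [MeasureTheory.ae_iff]
    have : {x : ℝ | ¬x ≠ π/2} = {π/2} := by ext y; simp
    rw [this]
    exact MeasureTheory.measure_singleton _
  have hcongr : ∫ x in (0:ℝ)..(π/2), (Real.log (Real.sin x) + Real.log (Real.cos x))
      = ∫ x in (0:ℝ)..(π/2), (Real.log (Real.sin (2 * x)) - Real.log 2) := by
    apply intervalIntegral.integral_congr_ae
    filter_upwards [hne] with x hx hxI
    rw [Set.uIoc_of_le (by positivity)] at hxI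
    obtain ⟨hx0, hx1⟩ := hxI
    have hx1' : x < π/2 := lt_of_le_of_ne hx1 hx
    have hs : 0 < Real.sin x := Real.sin_pos_of_pos_of_lt_pi hx0 (by linarith [Real.pi_pos])
    have hc : 0 < Real.cos x := Real.cos_pos_of_mem_Ioo ⟨by linarith, hx1'⟩
    rw [Real.sin_two_mul, Real.log_mul (by positivity) (by positivity),
      Real.log_mul (by norm_num) hs.ne']
    ring
  have hadd : ∫ x in (0:ℝ)..(π/2), (Real.log (Real.sin x) + Real.log (Real.cos x)) = 2 * J := by
    rw [intervalIntegral.integral_add logsin_int_half logcos_int_half, hcos, ← hJ]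
    ring
  have hsub : ∫ x in (0:ℝ)..(π/2), (Real.log (Real.sin (2 * x)) - Real.log 2)
      = J - π/2 * Real.log 2 := by
    rw [intervalIntegral.integral_sub hdint (intervalIntegrable_const), hdouble,
      intervalIntegral.integral_const]
    norm_num
  have : 2 * J = J - π/2 * Real.log 2 := by rw [← hadd, hcongr, hsub]
  rw [hfull]
  linarith

open MeasureTheory intervalIntegral in
lemma coslogsin_int : IntervalIntegrable (fun x => Real.cos (2*x) * Real.log (Real.sin x)) volume 0 π := by
  refine logsin_int.mono_fun ?_ ?_
  · exact ((Real.measurable_cos.comp (measurable_const_mul 2)).mul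
      (Real.measurable_log.comp Real.measurable_sin)).aestronglyMeasurable
  · refine Filter.Eventually.of_forall fun x => ?_
    simp only [norm_mul, Real.norm_eq_abs]
    calc |Real.cos (2*x)| * |Real.log (Real.sin x)| ≤ 1 * |Real.log (Real.sin x)| := by
          gcongr; exact Real.abs_cos_le_one _
      _ = |Real.log (Real.sin x)| := one_mul _

open MeasureTheory intervalIntegral in
lemma integral_coslogsin : ∫ x in (0:ℝ)..π, Real.cos (2*x) * Real.log (Real.sin x) = -(π/2) := by
  have key := intervalIntegral.integral_eq_sub_of_hasDeriv_right_of_le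
    (f := fun t => -Real.cos t * Real.negMulLog (Real.sin t) - t/2 - (1/4) * Real.sin (2*t))
    (f' := fun x => Real.cos (2*x) * Real.log (Real.sin x))
    Real.pi_pos.le ?_ ?_ coslogsin_int
  · rw [key]
    norm_num [Real.sin_pi, Real.sin_two_pi, Real.negMulLog_zero]
  · apply Continuous.continuousOn
    fun_prop
  · intro x hx
    have hs : 0 < Real.sin x := Real.sin_pos_of_pos_of_lt_pi hx.1 hx.2
    have h1 : HasDerivAt (fun t => Real.negMulLog (Real.sin t))
        ((-Real.log (Real.sin x) - 1) * Real.cos x) x :=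
      (Real.hasDerivAt_negMulLog hs.ne').comp x (Real.hasDerivAt_sin x)
    have h2 : HasDerivAt (fun t : ℝ => -Real.cos t) (Real.sin x) x := by
      exact (Real.hasDerivAt_cos x).neg.congr_deriv (by simp)
    have h3 := h2.mul h1
    have h4 : HasDerivAt (fun t : ℝ => t/2) (1/2) x := by
      simpa using (hasDerivAt_id x).div_const 2
    have h5 : HasDerivAt (fun t : ℝ => (1/4) * Real.sin (2*t)) ((1/4) * (Real.cos (2*x) * 2)) x := by
      exact (((Real.hasDerivAt_sin (2*x)).comp x (by simpa using (hasDerivAt_id x).const_mul 2))).const_mul (1/4)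
    have h6 := (h3.sub h4).sub h5
    refine HasDerivWithinAt.mono ?_ (Set.subset_univ _)
    rw [hasDerivWithinAt_univ]
    convert h6 using 1
    · rfl
    simp only [Real.negMulLog, Real.cos_two_mul']
    linear_combination (Real.log (Real.sin x) - 1/2) * Real.sin_sq x - Real.log (Real.sin x) * Real.sin_sq_add_cos_sq x

open MeasureTheory intervalIntegral in
lemma eta_eq (t : ℝ) : Real.negMulLog (Real.sin t ^ 2)
    = Real.cos (2*t) * Real.log (Real.sin t) - Real.log (Real.sin t) := by
  simp only [Real.negMulLog, Real.log_pow, Real.cos_two_mul']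
  push_cast
  linear_combination (-Real.log (Real.sin t)) * Real.sin_sq_add_cos_sq t

open MeasureTheory intervalIntegral in
lemma integral_eta : ∫ x in (0:ℝ)..1, Real.negMulLog (Real.sin (π * x) ^ 2)
    = Real.log 2 - 1/2 := by
  have hcv := intervalIntegral.integral_comp_mul_left
    (a := (0:ℝ)) (b := 1) (fun t => Real.negMulLog (Real.sin t ^ 2)) Real.pi_ne_zero
  simp only [mul_zero, mul_one] at hcv
  rw [hcv]
  have hsplit : ∫ t in (0:ℝ)..π, Real.negMulLog (Real.sin t ^ 2)
      = (∫ t in (0:ℝ)..π, Real.cos (2*t) * Real.log (Real.sin t))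
        - ∫ t in (0:ℝ)..π, Real.log (Real.sin t) := by
    rw [← intervalIntegral.integral_sub coslogsin_int logsin_int]
    exact intervalIntegral.integral_congr fun t _ => eta_eq t
  rw [hsplit, integral_coslogsin, integral_log_sin_pi, smul_eq_mul]
  field_simp
  ring

open MeasureTheory intervalIntegral in
lemma riemann_sum_tendsto (f : ℝ → ℝ) (hf : Continuous f) :
    Tendsto (fun n : ℕ => ((n : ℝ))⁻¹ * ∑ j ∈ Finset.Icc 1 n, f (j / n))
      atTop (nhds (∫ x in (0:ℝ)..1, f x)) := by
  rw [Metric.tendsto_atTop]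
  intro ε hε
  have huc : UniformContinuousOn f (Set.Icc 0 1) :=
    (isCompact_Icc).uniformContinuousOn_of_continuous hf.continuousOn
  rw [Metric.uniformContinuousOn_iff] at huc
  obtain ⟨δ, hδ, H⟩ := huc (ε/2) (half_pos hε)
  obtain ⟨N, hN⟩ := exists_nat_gt (1/δ)
  refine ⟨max N 1, fun n hn => ?_⟩
  have hn1 : 1 ≤ n := le_trans (le_max_right N 1) hn
  have hnN : (N : ℝ) ≤ n := Nat.cast_le.mpr (le_trans (le_max_left N 1) hn)
  have hnpos : (0:ℝ) < n := by exact_mod_cast hn1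
  have hinv : (n:ℝ)⁻¹ < δ := by
    rw [inv_lt_comm₀ hnpos hδ, ← one_div]
    exact lt_of_lt_of_le hN hnN
  -- decompose the integral
  have hint : ∀ k < n, IntervalIntegrable f MeasureTheory.volume ((k:ℝ)/n) (((k:ℕ)+1:ℕ)/n) :=
    fun k _ => hf.intervalIntegrable _ _
  have hdecomp := intervalIntegral.sum_integral_adjacent_intervals
    (a := fun k : ℕ => (k:ℝ)/n) (n := n) hint
  simp only [Nat.cast_zero, zero_div] at hdecomp
  rw [div_self hnpos.ne'] at hdecomp
  -- rewrite the sum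
  have hsum : ((n : ℝ))⁻¹ * ∑ j ∈ Finset.Icc 1 n, f (j / n)
      = ∑ k ∈ Finset.range n, (n:ℝ)⁻¹ * f (((k:ℝ)+1) / n) := by
    rw [Finset.mul_sum, ← Finset.Ico_add_one_right_eq_Icc, Finset.sum_Ico_eq_sum_range]
    simp only [Nat.add_sub_cancel_left, Nat.succ_sub_one, Nat.add_sub_cancel]
    refine Finset.sum_congr rfl fun k _ => ?_
    push_cast
    ring_nf
  rw [Real.dist_eq, hsum, ← hdecomp, ← Finset.sum_sub_distrib]
  have hterm : ∀ k ∈ Finset.range n,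
      |(n:ℝ)⁻¹ * f (((k:ℝ)+1) / n) - ∫ x in ((k:ℝ)/n)..(((k:ℕ)+1:ℕ)/n), f x|
        ≤ (ε/2) * (n:ℝ)⁻¹ := by
    intro k hk
    rw [Finset.mem_range] at hk
    have hcast : (((k:ℕ)+1:ℕ) : ℝ) = (k:ℝ) + 1 := by push_cast; ring
    have hconst : (n:ℝ)⁻¹ * f (((k:ℝ)+1) / n)
        = ∫ _x in ((k:ℝ)/n)..(((k:ℝ)+1)/n), f (((k:ℝ)+1) / n) := by
      rw [intervalIntegral.integral_const, smul_eq_mul]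
      congr 1
      field_simp
      ring
    rw [hcast, hconst, ← intervalIntegral.integral_sub (by
        exact intervalIntegrable_const) (hf.intervalIntegrable _ _)]
    have hbound := intervalIntegral.norm_integral_le_of_norm_le_const
      (a := (k:ℝ)/n) (b := ((k:ℝ)+1)/n) (C := ε/2)
      (f := fun x => f (((k:ℝ)+1) / n) - f x) ?_
    · rw [Real.norm_eq_abs] at hbound
      refine le_trans hbound ?_
      rw [show ((k:ℝ)+1)/n - (k:ℝ)/n = (n:ℝ)⁻¹ from by field_simp; ring,
        abs_of_nonneg (by positivity)]
    · intro x hx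
      rw [Set.uIoc_of_le (by gcongr <;> linarith)] at hx
      have hx1 : 0 ≤ x := le_trans (by positivity) hx.1.le
      have hx2 : x ≤ 1 := le_trans hx.2 (by
        rw [div_le_one hnpos]
        exact_mod_cast Nat.succ_le_of_lt hk)
      have hy1 : (0:ℝ) ≤ ((k:ℝ)+1)/n := by positivity
      have hy2 : ((k:ℝ)+1)/n ≤ 1 := by
        rw [div_le_one hnpos]
        exact_mod_cast Nat.succ_le_of_lt hk
      have hdist : dist (((k:ℝ)+1)/n) x < δ := by
        rw [Real.dist_eq, abs_of_nonneg (by linarith [hx.2])]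
        have : (k:ℝ)/n < x := hx.1
        have h2 : ((k:ℝ)+1)/n - (k:ℝ)/n = (n:ℝ)⁻¹ := by field_simp; ring
        calc ((k:ℝ)+1)/n - x < ((k:ℝ)+1)/n - (k:ℝ)/n := by linarith
          _ = (n:ℝ)⁻¹ := h2
          _ < δ := hinv
      have := H _ ⟨hy1, hy2⟩ _ ⟨hx1, hx2⟩ hdist
      rw [Real.dist_eq] at this
      rw [Real.norm_eq_abs]
      exact this.le
  calc |∑ k ∈ Finset.range n, ((n:ℝ)⁻¹ * f (((k:ℝ)+1) / n)
          - ∫ x in ((k:ℝ)/n)..(((k:ℕ)+1:ℕ)/n), f x)|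
      ≤ ∑ k ∈ Finset.range n, |(n:ℝ)⁻¹ * f (((k:ℝ)+1) / n)
          - ∫ x in ((k:ℝ)/n)..(((k:ℕ)+1:ℕ)/n), f x| := Finset.abs_sum_le_sum_abs _ _
    _ ≤ ∑ _k ∈ Finset.range n, (ε/2) * (n:ℝ)⁻¹ := Finset.sum_le_sum hterm
    _ = ε/2 := by
        rw [Finset.sum_const, Finset.card_range, nsmul_eq_mul]
        field_simp
    _ < ε := by linarith

/-- The informational power of the regular `n`-gon qubit POVM,
`ln 2 − (2/n)·Σ_{j=1}^n η(sin²(πj/n))`, converges to `1 − ln 2` as `n → ∞`. -/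
theorem stmt_17 :
    Tendsto (fun n : ℕ =>
        Real.log 2 - (2 / (n : ℝ)) *
          ∑ j ∈ Finset.Icc 1 n, Real.negMulLog (Real.sin (Real.pi * j / n) ^ 2))
      atTop (nhds (1 - Real.log 2)) := by
  have hf : Continuous (fun x : ℝ => Real.negMulLog (Real.sin (π * x) ^ 2)) :=
    Real.continuous_negMulLog.comp ((Real.continuous_sin.comp
      (continuous_const.mul continuous_id)).pow 2)
  have h := riemann_sum_tendsto _ hf
  rw [integral_eta] at h
  have h2 := (tendsto_const_nhds (x := Real.log 2) (f := atTop)).sub (h.const_mul 2)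
  have heq : (fun n : ℕ =>
        Real.log 2 - (2 / (n : ℝ)) *
          ∑ j ∈ Finset.Icc 1 n, Real.negMulLog (Real.sin (Real.pi * j / n) ^ 2))
      = fun n : ℕ => Real.log 2 - 2 * (((n : ℝ))⁻¹
          * ∑ j ∈ Finset.Icc 1 n, Real.negMulLog (Real.sin (π * (j / n)) ^ 2)) := by
    funext n
    congr 1
    rw [div_eq_mul_inv, mul_assoc]
    congr 2
    refine Finset.sum_congr rfl fun j _ => ?_
    rw [mul_div_assoc]
  rw [heq]
  convert h2 using 2
  ring
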